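/- arXiv:1909.10597 — 7 statements merged into one kernel-verified Lean document; each statement's English description precedes it below -/
import Mathlib

section
/- Let S ⊆ M_n(ℂ) and suppose η·I ∈ Co(S) for some η ∈ ℂ. Then HS(S) is star-shaped from η: for every λ ∈ HS(S) and α ∈ [0,1], the point (1−α)λ + αη belongs to HS(S). -/
open Matrix

/-- The hull spectrum of a set of matrices: all eigenvalues of matrices in the convex hull. -/
def HS {n : ℕ} (S : Set (Matrix (Fin n) (Fin n) ℂ)) : Set ℂ :=
  {z | ∃ M ∈ convexHull ℝ S, z ∈ spectrum ℂ M}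

theorem hull_spectrum_star_shaped {n : ℕ} (S : Set (Matrix (Fin n) (Fin n) ℂ)) (η : ℂ)
    (hη : η • (1 : Matrix (Fin n) (Fin n) ℂ) ∈ convexHull ℝ S) :
    ∀ lam ∈ HS S, ∀ α : ℝ, α ∈ Set.Icc (0 : ℝ) 1 →
      (1 - (α : ℂ)) * lam + (α : ℂ) * η ∈ HS S := by
  rintro lam ⟨M, hM, hlam⟩ α ⟨h0, h1⟩
  rw [spectrum.mem_iff] at hlam
  have hnt : Nontrivial (Matrix (Fin n) (Fin n) ℂ) := by
    by_contra h
    rw [not_nontrivial_iff_subsingleton] at h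
    exact hlam (isUnit_of_subsingleton _)
  have hmem : (1 - α) • M + α • (η • (1 : Matrix (Fin n) (Fin n) ℂ)) ∈ convexHull ℝ S :=
    (convex_convexHull ℝ S) hM hη (by linarith) h0 (by ring)
  refine ⟨(1 - α) • M + α • (η • (1 : Matrix (Fin n) (Fin n) ℂ)), hmem, ?_⟩
  rw [spectrum.mem_iff]
  by_cases hα : α = 1
  · subst hα
    simp [Algebra.algebraMap_eq_smul_one]
  · have hc : (1 - (α : ℂ)) ≠ 0 := by
      intro h
      apply hα
      have : (α : ℂ) = 1 := by linear_combination -h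
      exact_mod_cast this
    intro hu
    apply hlam
    have key : algebraMap ℂ (Matrix (Fin n) (Fin n) ℂ) ((1 - (α : ℂ)) * lam + (α : ℂ) * η)
        - ((1 - α) • M + α • (η • (1 : Matrix (Fin n) (Fin n) ℂ)))
        = (1 - (α : ℂ)) • (algebraMap ℂ (Matrix (Fin n) (Fin n) ℂ) lam - M) := by
      rw [Algebra.algebraMap_eq_smul_one, Algebra.algebraMap_eq_smul_one,
        ← Complex.coe_smul (1 - α) M, ← Complex.coe_smul α]
      push_cast
      module
    rw [key] at hu
    have h1 : IsUnit ((1 - (α : ℂ))⁻¹ • (1 : Matrix (Fin n) (Fin n) ℂ)) := by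
      rw [← Algebra.algebraMap_eq_smul_one]
      exact (isUnit_iff_ne_zero.2 (inv_ne_zero hc)).map (algebraMap ℂ _)
    have h2 := h1.mul hu
    rwa [smul_mul_assoc, one_mul, smul_smul, inv_mul_cancel₀ hc, one_smul] at h2
end

section
/- If λ ∈ ℝ, λ < 0, λ ≠ −1, then the set of convex combinations of elements of the multiplicative group ⟨λ⟩ = {λ^k : k ∈ ℤ} is all of ℝ. -/
theorem convexHull_zpowers_neg_real {lam : ℝ} (hneg : lam < 0) (hne : lam ≠ -1) :
    convexHull ℝ (Set.range fun k : ℤ => lam ^ k) = Set.univ := by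
  have hlam0 : lam ≠ 0 := ne_of_lt hneg
  obtain ⟨c, hc⟩ : ∃ c : ℤ, 1 < lam ^ c := by
    rcases lt_or_gt_of_ne hne with h | h
    · refine ⟨2, ?_⟩
      rw [zpow_two]; nlinarith
    · refine ⟨-2, ?_⟩
      have hpos : (0:ℝ) < lam ^ (2:ℕ) := by positivity
      have hlt : lam ^ (2:ℕ) < 1 := by nlinarith
      have : (1:ℝ) < (lam ^ (2:ℕ))⁻¹ := (one_lt_inv₀ hpos).mpr hlt
      rw [zpow_neg]
      simpa using this
  apply Set.eq_univ_of_forall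
  intro x
  obtain ⟨n, hn⟩ := pow_unbounded_of_one_lt (max x (x / lam)) hc
  have hb : lam ^ (c * n) = (lam ^ c) ^ n := by rw [zpow_mul, zpow_natCast]
  have hbx : x ≤ lam ^ (c * n) := by
    rw [hb]; exact le_of_lt (lt_of_le_of_lt (le_max_left _ _) hn)
  have hax : lam ^ (c * n + 1) ≤ x := by
    have h1 : x / lam < (lam ^ c) ^ n := lt_of_le_of_lt (le_max_right _ _) hn
    have h2 : (lam ^ c) ^ n * lam < (x / lam) * lam :=
      mul_lt_mul_of_neg_right h1 hneg
    rw [div_mul_cancel₀ x hlam0] at h2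
    rw [zpow_add₀ hlam0, hb, zpow_one]
    exact le_of_lt h2
  have hmem : x ∈ segment ℝ (lam ^ (c * n + 1)) (lam ^ (c * n)) := by
    rw [segment_eq_Icc (le_trans hax hbx)]
    exact ⟨hax, hbx⟩
  have h1 : lam ^ (c * n + 1) ∈ Set.range fun k : ℤ => lam ^ k := ⟨c * n + 1, rfl⟩
  have h2 : lam ^ (c * n) ∈ Set.range fun k : ℤ => lam ^ k := ⟨c * n, rfl⟩
  exact segment_subset_convexHull h1 h2 hmem
end

section
/- If λ ∈ ℂ with |λ| ≠ 1 and λ ∉ ℝ, then the set of convex combinations of elements of ⟨λ⟩ = {λ^k : k ∈ ℤ} is all of ℂ. -/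
open Real Complex

/-- Cramer's rule: two vectors in `ℂ` with nonzero determinant span `ℂ` over `ℝ`. -/
lemma span_pair_top_of_det_ne_zero {u v : ℂ} (h : u.re * v.im - u.im * v.re ≠ 0) :
    Submodule.span ℝ {u, v} = ⊤ := by
  rw [eq_top_iff]
  rintro z -
  rw [Submodule.mem_span_pair]
  have h' : v.im * u.re - v.re * u.im ≠ 0 := by intro h0; apply h; linarith
  refine ⟨(z.re * v.im - z.im * v.re) / (u.re * v.im - u.im * v.re),
    (u.re * z.im - u.im * z.re) / (u.re * v.im - u.im * v.re), ?_⟩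
  apply Complex.ext <;>
    simp only [Complex.add_re, Complex.add_im, Complex.real_smul, Complex.mul_re,
      Complex.mul_im, Complex.ofReal_re, Complex.ofReal_im] <;>
    field_simp <;> ring

/-- For a step `γ ∈ (0, 2π/3]`, the walk `k γ + φ` lands infinitely often in a region
where `cos ≥ 1/2`. -/
lemma exists_cos_ge_half (γ φ : ℝ) (hγ0 : 0 < γ) (hγ : γ ≤ 2 * π / 3) (N : ℕ) :
    ∃ k : ℕ, N ≤ k ∧ 1 / 2 ≤ Real.cos (k * γ + φ) := by
  have hπ := Real.pi_pos
  set j : ℤ := ⌈(N * γ + π / 3 + φ) / (2 * π)⌉ with hj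
  have hjge : (N : ℝ) * γ + π / 3 + φ ≤ 2 * π * j := by
    have := Int.le_ceil ((N * γ + π / 3 + φ) / (2 * π))
    calc (N : ℝ) * γ + π / 3 + φ
        = ((N * γ + π / 3 + φ) / (2 * π)) * (2 * π) := by rw [div_mul_cancel₀]; positivity
      _ ≤ (j : ℝ) * (2 * π) := by
          apply mul_le_mul_of_nonneg_right this (by positivity)
      _ = 2 * π * j := by ring
  set x : ℝ := (2 * π * j - π / 3 - φ) / γ with hx
  have hxN : (N : ℝ) ≤ x := by
    rw [hx, le_div_iff₀ hγ0]
    linarith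
  set k' : ℤ := ⌈x⌉ with hk'
  have hk'x : x ≤ (k' : ℝ) := Int.le_ceil x
  have hk'x2 : (k' : ℝ) < x + 1 := Int.ceil_lt_add_one x
  have hk'0 : 0 ≤ k' := by
    have : (0 : ℝ) ≤ x := le_trans (by positivity) hxN
    exact_mod_cast le_trans this hk'x
  refine ⟨k'.toNat, ?_, ?_⟩
  · have : (N : ℝ) ≤ (k' : ℝ) := le_trans hxN hk'x
    have hN : (N : ℤ) ≤ k' := by exact_mod_cast this
    omega
  · have hcast : ((k'.toNat : ℕ) : ℝ) = (k' : ℝ) := by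
      exact_mod_cast Int.toNat_of_nonneg hk'0
    rw [hcast]
    -- the point y = k'γ + φ - 2πj lies in [-π/3, -π/3 + γ] ⊆ [-π/3, π/3]
    set y : ℝ := k' * γ + φ - 2 * π * j with hy
    have hylb : -(π / 3) ≤ y := by
      have : (2 * π * j - π / 3 - φ) ≤ k' * γ := by
        calc 2 * π * j - π / 3 - φ = x * γ := by rw [hx, div_mul_cancel₀ _ hγ0.ne']
          _ ≤ k' * γ := by apply mul_le_mul_of_nonneg_right hk'x hγ0.le
      linarith
    have hyub : y ≤ π / 3 := by
      have : (k' : ℝ) * γ < (x + 1) * γ := by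
        apply mul_lt_mul_of_pos_right hk'x2 hγ0
      have hxγ : x * γ = 2 * π * j - π / 3 - φ := by rw [hx, div_mul_cancel₀ _ hγ0.ne']
      have hexp : (x + 1) * γ = x * γ + γ := by ring
      linarith
    have : Real.cos ((k' : ℝ) * γ + φ) = Real.cos y := by
      rw [show (k' : ℝ) * γ + φ = y + j * (2 * π) by rw [hy]; ring]
      exact Real.cos_add_int_mul_two_pi y j
    rw [this, ← Real.cos_abs]
    rw [← Real.cos_pi_div_three]
    apply Real.cos_le_cos_of_nonneg_of_le_pi (abs_nonneg y) (by linarith)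
    rw [abs_le]
    constructor <;> linarith

/-- For nonreal direction `θ` (i.e. `θ ∈ (-π,π)`, `θ ≠ 0`), `cos (kθ - ψ) ≥ 1/2` for
arbitrarily large `k`. -/
lemma exists_cos_ge_half' {θ : ℝ} (hθl : -π < θ) (hθu : θ < π) (hθ0 : θ ≠ 0) (ψ : ℝ) (N : ℕ) :
    ∃ k : ℕ, N ≤ k ∧ 1 / 2 ≤ Real.cos (k * θ - ψ) := by
  have hπ := Real.pi_pos
  rcases lt_or_gt_of_ne hθ0 with hneg | hpos
  · -- θ < 0
    rcases le_or_gt (-(2 * π / 3)) θ with h1 | h2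
    · -- -2π/3 ≤ θ < 0 : step γ = -θ
      obtain ⟨k, hk, hc⟩ := exists_cos_ge_half (-θ) ψ (by linarith) (by linarith) N
      refine ⟨k, hk, ?_⟩
      rwa [show (k : ℝ) * θ - ψ = -(k * (-θ) + ψ) by ring, Real.cos_neg]
    · -- -π < θ < -2π/3 : step γ = 2θ + 2π, use k = 2m
      obtain ⟨m, hm, hc⟩ := exists_cos_ge_half (2 * θ + 2 * π) (-ψ) (by linarith) (by linarith) N
      refine ⟨2 * m, by omega, ?_⟩
      have : Real.cos ((m : ℝ) * (2 * θ + 2 * π) + -ψ) = Real.cos ((2 * m : ℕ) * θ - ψ) := by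
        rw [show (m : ℝ) * (2 * θ + 2 * π) + -ψ = ((2 * m : ℕ) * θ - ψ) + (m : ℤ) * (2 * π) by
          push_cast; ring]
        rw [Real.cos_add_int_mul_two_pi]
      rwa [this] at hc
  · -- θ > 0
    rcases le_or_gt θ (2 * π / 3) with h1 | h2
    · -- 0 < θ ≤ 2π/3
      obtain ⟨k, hk, hc⟩ := exists_cos_ge_half θ (-ψ) hpos h1 N
      refine ⟨k, hk, ?_⟩
      rwa [show (k : ℝ) * θ + -ψ = k * θ - ψ by ring] at hc
    · -- 2π/3 < θ < π : step γ = 2π - 2θ, use k = 2m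
      obtain ⟨m, hm, hc⟩ := exists_cos_ge_half (2 * π - 2 * θ) ψ (by linarith) (by linarith) N
      refine ⟨2 * m, by omega, ?_⟩
      have : Real.cos ((m : ℝ) * (2 * π - 2 * θ) + ψ) = Real.cos ((2 * m : ℕ) * θ - ψ) := by
        rw [show (m : ℝ) * (2 * π - 2 * θ) + ψ = -((2 * m : ℕ) * θ - ψ) + (m : ℤ) * (2 * π) by
          push_cast; ring]
        rw [Real.cos_add_int_mul_two_pi, Real.cos_neg]
      rwa [this] at hc

lemma convexHull_zpowers_key {lam : ℂ} (h1 : 1 < ‖lam‖) (him : lam.im ≠ 0) :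
    convexHull ℝ (Set.range fun k : ℤ => lam ^ k) = Set.univ := by
  set S : Set ℂ := Set.range fun k : ℤ => lam ^ k with hS
  have hmem : ∀ k : ℤ, lam ^ k ∈ S := fun k => ⟨k, rfl⟩
  have hC : Convex ℝ (convexHull ℝ S) := convex_convexHull ℝ S
  by_contra hne
  obtain ⟨x, hx⟩ := (Set.ne_univ_iff_exists_notMem _).1 hne
  -- the affine span of S is everything
  have hdet : (lam - 1).re * (lam ^ 2 - 1).im - (lam - 1).im * (lam ^ 2 - 1).re
      = lam.im * ((lam.re - 1) ^ 2 + lam.im ^ 2) := by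
    simp only [Complex.sub_re, Complex.sub_im, Complex.one_re, Complex.one_im, pow_two,
      Complex.mul_re, Complex.mul_im]
    ring
  have hspanS : affineSpan ℝ S = ⊤ := by
    rw [AffineSubspace.affineSpan_eq_top_iff_vectorSpan_eq_top_of_nonempty ℝ ℂ ℂ ⟨_, hmem 0⟩]
    rw [eq_top_iff, ← span_pair_top_of_det_ne_zero (u := lam - 1) (v := lam ^ 2 - 1)
      (by rw [hdet]; exact mul_ne_zero him (by positivity))]
    apply Submodule.span_le.2
    rintro v (rfl | rfl)
    · have := vsub_mem_vectorSpan ℝ (hmem 1) (hmem 0)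
      simpa using this
    · have := vsub_mem_vectorSpan ℝ (hmem 2) (hmem 0)
      simpa using this
  have hint : (interior (convexHull ℝ S)).Nonempty := by
    rw [hC.interior_nonempty_iff_affineSpan_eq_top, affineSpan_convexHull]
    exact hspanS
  obtain ⟨p, hp⟩ := hint
  -- separate
  obtain ⟨f, u, hfu, hux⟩ := geometric_hahn_banach_open hC.interior
    isOpen_interior (convex_singleton x)
    (Set.disjoint_singleton_right.2 fun h => hx (interior_subset h))
  have hux' : u ≤ f x := hux x rfl
  -- f ≤ u on the whole hull
  have hfs : ∀ s ∈ convexHull ℝ S, f s ≤ u := by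
    intro s hs
    by_contra hcon
    push_neg at hcon
    have hfp : f p < u := hfu p hp
    set t : ℝ := (u - f p) / (f s - f p) with ht
    have hsp : 0 < f s - f p := by linarith
    have ht0 : 0 < t := div_pos (by linarith) hsp
    have ht1 : t < 1 := (div_lt_one hsp).2 (by linarith)
    set t' : ℝ := (t + 1) / 2 with ht'
    have h1t' : 0 < 1 - t' := by rw [ht']; linarith
    have ht'0 : 0 < t' := by rw [ht']; linarith
    have hmem' : (1 - t') • p + t' • s ∈ interior (convexHull ℝ S) :=
      hC.openSegment_interior_closure_subset_interior hp (subset_closure hs)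
        ⟨1 - t', t', h1t', ht'0, by ring, rfl⟩
    have := hfu _ hmem'
    rw [map_add, map_smul, map_smul, smul_eq_mul, smul_eq_mul] at this
    have htt' : t < t' := by rw [ht']; linarith
    have : t' * (f s - f p) < u - f p := by nlinarith
    have htval : t * (f s - f p) = u - f p := by
      rw [ht]; field_simp
    nlinarith
  -- the representing complex number w
  set w : ℂ := Complex.mk (f 1) (f Complex.I) with hw
  have hwre : w.re = f 1 := rfl
  have hwim : w.im = f Complex.I := rfl
  have hfz : ∀ z : ℂ, f z = z.re * w.re + z.im * w.im := by
    intro z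
    rw [hwre, hwim]
    conv_lhs => rw [← Complex.re_add_im z]
    rw [show (↑z.re + ↑z.im * Complex.I : ℂ) = z.re • (1 : ℂ) + z.im • Complex.I by
      simp [Complex.real_smul]]
    rw [map_add, map_smul, map_smul, smul_eq_mul, smul_eq_mul]
  have hw0 : w ≠ 0 := by
    intro h
    have hfp : f p < u := hfu p hp
    rw [hfz p, h] at hfp
    rw [hfz x, h] at hux'
    simp at hfp hux'
    linarith
  set R : ℝ := ‖w‖ with hR
  have hR0 : 0 < R := by
    rw [hR]; exact norm_pos_iff.2 hw0
  set ψ : ℝ := Complex.arg w with hψ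
  have hwreψ : w.re = R * Real.cos ψ := by
    rw [hψ, hR, Complex.cos_arg hw0]
    field_simp
  have hwimψ : w.im = R * Real.sin ψ := by
    rw [hψ, hR, Complex.sin_arg]
    field_simp
  set r : ℝ := ‖lam‖ with hr
  set θ : ℝ := Complex.arg lam with hθ
  -- the value of f on powers of lam
  have hpow : ∀ k : ℕ, f (lam ^ k) = r ^ k * R * Real.cos (k * θ - ψ) := by
    intro k
    have hlamk : lam ^ k = (r : ℂ) ^ k * Complex.exp ((k * θ : ℝ) * Complex.I) := by
      conv_lhs => rw [← Complex.norm_mul_exp_arg_mul_I lam]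
      rw [mul_pow, ← Complex.exp_nat_mul]
      push_cast
      rw [hr, hθ]
      ring_nf
    have hre : (lam ^ k).re = r ^ k * Real.cos (k * θ) := by
      rw [hlamk]
      rw [show ((r : ℂ) ^ k : ℂ) = ((r ^ k : ℝ) : ℂ) by push_cast; ring]
      rw [Complex.re_ofReal_mul, Complex.exp_ofReal_mul_I_re]
    have him' : (lam ^ k).im = r ^ k * Real.sin (k * θ) := by
      rw [hlamk]
      rw [show ((r : ℂ) ^ k : ℂ) = ((r ^ k : ℝ) : ℂ) by push_cast; ring]
      rw [Complex.im_ofReal_mul, Complex.exp_ofReal_mul_I_im]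
    rw [hfz, hre, him', hwreψ, hwimψ, Real.cos_sub]
    ring
  -- choose k
  have hθ0 : θ ≠ 0 := by
    intro h
    rw [hθ, Complex.arg_eq_zero_iff] at h
    exact him h.2
  have hθπ : θ < π := by
    rcases lt_or_eq_of_le (Complex.arg_le_pi lam) with h | h
    · exact h
    · exfalso
      rw [Complex.arg_eq_pi_iff] at h
      exact him h.2
  have hθπ' : -π < θ := Complex.neg_pi_lt_arg lam
  obtain ⟨N, hN⟩ := pow_unbounded_of_one_lt (2 * u / R) h1
  obtain ⟨k, hkN, hck⟩ := exists_cos_ge_half' hθπ' hθπ hθ0 ψ N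
  have hfk : f (lam ^ k) ≤ u := by
    have := hfs (lam ^ (k : ℤ)) (subset_convexHull ℝ S (hmem k))
    rwa [zpow_natCast] at this
  rw [hpow k] at hfk
  have hrN : r ^ N ≤ r ^ k := pow_le_pow_right₀ (le_of_lt h1) hkN
  have h2u : 2 * u < r ^ N * R := by
    rw [div_lt_iff₀ hR0] at hN
    linarith
  have hr0 : 0 < r := lt_trans one_pos h1
  have hA : r ^ N * R ≤ r ^ k * R := mul_le_mul_of_nonneg_right hrN hR0.le
  have hB : r ^ k * R * (1 / 2) ≤ r ^ k * R * Real.cos ((k : ℝ) * θ - ψ) :=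
    mul_le_mul_of_nonneg_left hck (mul_nonneg (pow_pos hr0 k).le hR0.le)
  nlinarith

theorem convexHull_zpowers_type5 {lam : ℂ} (habs : ‖lam‖ ≠ 1) (him : lam.im ≠ 0) :
    convexHull ℝ (Set.range fun k : ℤ => lam ^ k) = Set.univ := by
  have hlam0 : lam ≠ 0 := fun h => him (by rw [h]; rfl)
  have habs0 : 0 < ‖lam‖ := norm_pos_iff.2 hlam0
  rcases lt_or_gt_of_ne habs with hlt | hgt
  · -- |lam| < 1 : use lam⁻¹
    have hinv1 : 1 < ‖lam⁻¹‖ := by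
      rw [norm_inv]
      exact (one_lt_inv₀ habs0).2 hlt
    have hinvim : lam⁻¹.im ≠ 0 := by
      rw [Complex.inv_im]
      apply div_ne_zero (neg_ne_zero.2 him) (Complex.normSq_pos.2 hlam0).ne'
    have hrange : (Set.range fun k : ℤ => lam ^ k) = Set.range fun k : ℤ => lam⁻¹ ^ k := by
      ext z
      constructor
      · rintro ⟨k, rfl⟩
        exact ⟨-k, by simp [zpow_neg, inv_zpow]⟩
      · rintro ⟨k, rfl⟩
        exact ⟨-k, by simp [zpow_neg, inv_zpow]⟩
    rw [hrange]
    exact convexHull_zpowers_key hinv1 hinvim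
  · exact convexHull_zpowers_key hgt him
end

section
/- Let G be a finite matrix group and suppose some A ∈ G has a primitive k-th root of unity as an eigenvalue. Then Π_k ⊆ HS(G), where Π_k is the convex hull of the k-th roots of unity. -/
open Matrix

theorem polygon_subset_hull_spectrum {n k : ℕ} (hk : 0 < k)
    (G : Subgroup (GL (Fin n) ℂ)) [Finite G]
    (A : GL (Fin n) ℂ) (hA : A ∈ G) (μ : ℂ)
    (hμspec : μ ∈ spectrum ℂ (A : Matrix (Fin n) (Fin n) ℂ))
    (hμprim : IsPrimitiveRoot μ k) :
    convexHull ℝ {z : ℂ | z ^ k = 1} ⊆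
      HS ((fun B : GL (Fin n) ℂ => (B : Matrix (Fin n) (Fin n) ℂ)) '' (G : Set (GL (Fin n) ℂ))) := by
  have : NeZero k := ⟨hk.ne'⟩
  classical
  intro z hz
  rw [convexHull_eq] at hz
  obtain ⟨ι, t, w, ζ, hw₀, hw₁, hζ, hcm⟩ := hz
  -- choose exponents
  have hpow : ∀ i ∈ t, ∃ m : ℕ, μ ^ m = ζ i := by
    intro i hi
    obtain ⟨m, _, hm⟩ := hμprim.eq_pow_of_pow_eq_one (hζ i hi)
    exact ⟨m, hm⟩
  choose m hm using hpow
  -- eigenvector of A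
  have hspec : μ ∈ spectrum ℂ (Matrix.toLinAlgEquiv' (A : Matrix (Fin n) (Fin n) ℂ)) := by
    rwa [AlgEquiv.spectrum_eq]
  have hev : Module.End.HasEigenvalue
      (Matrix.toLinAlgEquiv' (A : Matrix (Fin n) (Fin n) ℂ)) μ :=
    Module.End.hasEigenvalue_iff_mem_spectrum.mpr hspec
  obtain ⟨v, hv⟩ := hev.exists_hasEigenvector
  have hv0 : v ≠ 0 := hv.right
  have hAv : (A : Matrix (Fin n) (Fin n) ℂ).mulVec v = μ • v := by
    have := hv.apply_eq_smul
    rwa [Matrix.toLinAlgEquiv'_apply] at this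
  -- powers
  have hpowv : ∀ p : ℕ, ((A : Matrix (Fin n) (Fin n) ℂ) ^ p).mulVec v = μ ^ p • v := by
    intro p
    induction p with
    | zero => simp
    | succ p ih =>
        rw [pow_succ, ← Matrix.mulVec_mulVec, hAv, Matrix.mulVec_smul, ih,
          smul_smul, pow_succ, mul_comm]
  -- the matrix
  set P : ι → Matrix (Fin n) (Fin n) ℂ :=
    fun i => ((A ^ (if hi : i ∈ t then m i hi else 0) : GL (Fin n) ℂ) : Matrix (Fin n) (Fin n) ℂ)
    with hP
  set M : Matrix (Fin n) (Fin n) ℂ := t.centerMass w P with hM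
  have hPval : ∀ (i : ι) (hi : i ∈ t), P i = (A : Matrix (Fin n) (Fin n) ℂ) ^ (m i hi) := by
    intro i hi
    simp only [hP, dif_pos hi, Units.val_pow_eq_pow_val]
  refine ⟨M, ?_, ?_⟩
  · apply Finset.centerMass_mem_convexHull t hw₀ (by rw [hw₁]; exact one_pos)
    intro i hi
    exact ⟨A ^ (if hi : i ∈ t then m i hi else 0), pow_mem hA _, rfl⟩
  · -- z is an eigenvalue of M
    have hMsum : M = ∑ i ∈ t, w i • P i := by
      rw [hM, Finset.centerMass_eq_of_sum_1 _ _ hw₁]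
    have hMv : M.mulVec v = z • v := by
      rw [hMsum]
      have key : ∀ s : Finset ι, (∑ i ∈ s, w i • P i).mulVec v
          = ∑ i ∈ s, w i • (P i).mulVec v := by
        intro s
        induction s using Finset.induction with
        | empty => simp
        | insert a s hni ih =>
            rw [Finset.sum_insert hni, Matrix.add_mulVec, Finset.sum_insert hni, ← ih,
              Matrix.smul_mulVec]
      rw [key]
      have hz : z = ∑ i ∈ t, w i • ζ i := by
        rw [← hcm, Finset.centerMass_eq_of_sum_1 _ _ hw₁]
      rw [hz, Finset.sum_smul]
      refine Finset.sum_congr rfl fun i hi => ?_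
      rw [hPval i hi, hpowv, hm i hi]
      exact (smul_assoc _ _ _).symm
    have : Module.End.HasEigenvalue (Matrix.toLinAlgEquiv' M) z := by
      refine Module.End.hasEigenvalue_of_hasEigenvector ⟨?_, hv0⟩
      rw [Module.End.mem_eigenspace_iff]
      rw [Matrix.toLinAlgEquiv'_apply, hMv]
    rw [← AlgEquiv.spectrum_eq Matrix.toLinAlgEquiv' M]
    exact Module.End.hasEigenvalue_iff_mem_spectrum.mp this
end

section
/- For a finite matrix group G, HS(G) ⊆ Conv(⋃_{k∈K} Π_k), where K is the set of positive integers k such that some A ∈ G has a primitive k-th root of unity as an eigenvalue and Π_k is the convex hull of the k-th roots of unity. -/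
open Matrix

section HSaux
open Complex Module Finset

namespace HSproof

variable {n : ℕ}

lemma dotProduct_sum' {ι : Type*} (s : Finset ι) (v : Fin n → ℂ) (w : ι → (Fin n → ℂ)) :
    v ⬝ᵥ (∑ i ∈ s, w i) = ∑ i ∈ s, v ⬝ᵥ w i := by
  simp only [dotProduct, Finset.sum_apply, Finset.mul_sum]
  exact Finset.sum_comm

lemma sum_dotProduct' {ι : Type*} (s : Finset ι) (w : ι → (Fin n → ℂ)) (v : Fin n → ℂ) :
    (∑ i ∈ s, w i) ⬝ᵥ v = ∑ i ∈ s, w i ⬝ᵥ v := by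
  simp only [dotProduct, Finset.sum_apply, Finset.sum_mul]
  exact Finset.sum_comm

/-- sesquilinear form attached to a matrix `P`. -/
noncomputable def ipf (P : Matrix (Fin n) (Fin n) ℂ) (x y : Fin n → ℂ) : ℂ :=
  star x ⬝ᵥ P.mulVec y

variable (P : Matrix (Fin n) (Fin n) ℂ)

lemma ipf_smul_right (a : ℂ) (x y : Fin n → ℂ) : ipf P x (a • y) = a * ipf P x y := by
  simp [ipf, Matrix.mulVec_smul, smul_eq_mul]

lemma ipf_smul_left (a : ℂ) (x y : Fin n → ℂ) :
    ipf P (a • x) y = (starRingEnd ℂ) a * ipf P x y := by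
  unfold ipf
  rw [star_smul, smul_dotProduct, smul_eq_mul, starRingEnd_apply]

lemma ipf_sum_right {ι : Type*} (s : Finset ι) (x : Fin n → ℂ) (f : ι → (Fin n → ℂ)) :
    ipf P x (∑ i ∈ s, f i) = ∑ i ∈ s, ipf P x (f i) := by
  unfold ipf
  have : P.mulVec (∑ i ∈ s, f i) = ∑ i ∈ s, P.mulVec (f i) := by
    exact map_sum P.mulVecLin f s
  rw [this, dotProduct_sum']

lemma ipf_sum_left {ι : Type*} (s : Finset ι) (f : ι → (Fin n → ℂ)) (y : Fin n → ℂ) :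
    ipf P (∑ i ∈ s, f i) y = ∑ i ∈ s, ipf P (f i) y := by
  unfold ipf
  rw [star_sum, sum_dotProduct']

lemma ipf_zero_left (y : Fin n → ℂ) : ipf P 0 y = 0 := by
  simp [ipf]

variable {n : ℕ}

lemma key {m : ℕ} (hm : 0 < m) (P B : Matrix (Fin n) (Fin n) ℂ)
    (hB : B ^ m = 1)
    (hinv : ∀ x y, ipf P (B.mulVec x) (B.mulVec y) = ipf P x y)
    (hreal : ∀ w : Fin n → ℂ, ∃ r : ℝ, 0 ≤ r ∧ ipf P w w = (r : ℂ)) (v : Fin n → ℂ) :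
    ∃ q : ℕ → ℝ, (∀ j, 0 ≤ q j) ∧ (∑ j ∈ Finset.range m, (q j : ℂ)) = ipf P v v ∧
      ipf P v (B.mulVec v) = ∑ j ∈ Finset.range m, (q j : ℂ) * exp (2 * Real.pi * I / m) ^ j ∧
      ∀ j ∈ Finset.range m, q j ≠ 0 →
        ∃ w, w ≠ 0 ∧ B.mulVec w = exp (2 * Real.pi * I / m) ^ j • w := by
  set ω : ℂ := exp (2 * Real.pi * I / m) with hωdef
  have hω : IsPrimitiveRoot ω m := Complex.isPrimitiveRoot_exp m hm.ne'
  have hω0 : ω ≠ 0 := Complex.exp_ne_zero _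
  set χ : ℂ := ω⁻¹ with hχdef
  have hχω : χ * ω = 1 := inv_mul_cancel₀ hω0
  have hωχ : ω * χ = 1 := mul_inv_cancel₀ hω0
  have hχm : χ ^ m = 1 := by
    rw [hχdef, inv_pow, hω.pow_eq_one, inv_one]
  have hconj : (starRingEnd ℂ) ω = χ := by
    rw [hωdef, hχdef, ← Complex.exp_conj, ← Complex.exp_neg]
    congr 1
    rw [map_div₀, _root_.map_mul, _root_.map_mul, Complex.conj_I, Complex.conj_ofReal,
      map_ofNat, map_natCast]
    ring
  -- the Fourier components
  set u : ℕ → (Fin n → ℂ) :=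
    fun j => (m : ℂ)⁻¹ • ∑ i ∈ Finset.range m, χ ^ (j * i) • (B ^ i).mulVec v with hu
  have hm0 : (m : ℂ) ≠ 0 := Nat.cast_ne_zero.2 hm.ne'
  -- eigen equation
  have heig : ∀ j, B.mulVec (u j) = ω ^ j • u j := by
    intro j
    have hf : ∀ i, χ ^ (j * i) • (B ^ i).mulVec v
        = (fun i => χ ^ (j * i) • (B ^ i).mulVec v) i := fun i => rfl
    set f : ℕ → (Fin n → ℂ) := fun i => χ ^ (j * i) • (B ^ i).mulVec v with hfdef
    have hfm : f m = f 0 := by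
      simp only [hfdef, Nat.mul_zero, pow_zero, one_smul, hB, Matrix.one_mulVec]
      rw [show j * m = m * j from Nat.mul_comm j m, pow_mul, hχm, one_pow, one_smul]
    have hshift : ∑ i ∈ Finset.range m, f (i + 1) = ∑ i ∈ Finset.range m, f i := by
      have h1 := Finset.sum_range_succ f m
      have h2 := Finset.sum_range_succ' f m
      rw [h1, hfm] at h2
      exact (add_right_cancel h2.symm)
    have hterm : ∀ i, B.mulVec (f i) = ω ^ j • f (i + 1) := by
      intro i
      simp only [hfdef, Matrix.mulVec_smul, smul_smul]
      rw [show B.mulVec ((B ^ i).mulVec v) = (B ^ (i + 1)).mulVec v by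
        rw [Matrix.mulVec_mulVec, pow_succ']]
      congr 1
      rw [Nat.mul_add, Nat.mul_one, pow_add, ← mul_assoc]
      rw [show (ω ^ j) * χ ^ (j * i) * χ ^ j = (χ ^ (j*i)) * ((ω * χ) ^ j) by ring]
      rw [hωχ, one_pow, mul_one]
    calc B.mulVec (u j) = (m : ℂ)⁻¹ • ∑ i ∈ Finset.range m, B.mulVec (f i) := by
          rw [hu]
          simp only [Matrix.mulVec_smul]
          congr 1
          exact map_sum B.mulVecLin f (Finset.range m)
      _ = (m : ℂ)⁻¹ • ∑ i ∈ Finset.range m, ω ^ j • f (i + 1) := by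
          simp only [hterm]
      _ = ω ^ j • u j := by
          rw [← Finset.smul_sum, hshift, hu, smul_comm]
  -- decomposition
  have hdecomp : ∑ j ∈ Finset.range m, u j = v := by
    have hswap : ∑ j ∈ Finset.range m, u j
        = (m:ℂ)⁻¹ • ∑ i ∈ Finset.range m,
            (∑ j ∈ Finset.range m, (χ ^ i) ^ j) • (B ^ i).mulVec v := by
      rw [hu, ← Finset.smul_sum]
      congr 1
      rw [Finset.sum_comm]
      refine Finset.sum_congr rfl fun i _ => ?_
      rw [Finset.sum_smul]
      refine Finset.sum_congr rfl fun j _ => ?_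
      rw [← pow_mul, Nat.mul_comm i j]
    have hgeom : ∀ i ∈ Finset.range m, (∑ j ∈ Finset.range m, (χ ^ i) ^ j)
        = if i = 0 then (m:ℂ) else 0 := by
      intro i hi
      rcases eq_or_ne i 0 with rfl | h0
      · simp
      · rw [if_neg h0]
        have hne : χ ^ i ≠ 1 := by
          intro h
          rw [hχdef, inv_pow, inv_eq_one] at h
          exact hω.pow_ne_one_of_pos_of_lt h0 (Finset.mem_range.1 hi) h
        rw [geom_sum_eq hne, ← pow_mul, Nat.mul_comm i m, pow_mul, hχm, one_pow,
          sub_self, zero_div]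
    rw [hswap]
    have hrepl : ∑ i ∈ Finset.range m, (∑ j ∈ Finset.range m, (χ ^ i) ^ j) • (B ^ i).mulVec v
        = ∑ i ∈ Finset.range m, (if i = 0 then (m:ℂ) else 0) • (B ^ i).mulVec v :=
      Finset.sum_congr rfl fun i hi => by rw [hgeom i hi]
    rw [hrepl,
      Finset.sum_eq_single_of_mem 0 (Finset.mem_range.2 hm)
        (fun k _ hk => by rw [if_neg hk, zero_smul]),
      if_pos rfl, pow_zero, Matrix.one_mulVec, smul_smul, inv_mul_cancel₀ hm0, one_smul]
  -- orthogonality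
  have horth : ∀ j ∈ Finset.range m, ∀ k ∈ Finset.range m, j ≠ k → ipf P (u j) (u k) = 0 := by
    intro j hj k hk hjk
    have h := hinv (u j) (u k)
    rw [heig j, heig k, ipf_smul_left, ipf_smul_right, map_pow, hconj] at h
    by_contra hne
    apply hjk
    have hc : χ ^ j * ω ^ k = 1 := by
      have h' : (χ ^ j * ω ^ k) * ipf P (u j) (u k) = 1 * ipf P (u j) (u k) := by
        rw [one_mul, mul_assoc]; exact h
      exact mul_right_cancel₀ hne h'
    have hjk2 : ω ^ j = ω ^ k := by
      calc ω ^ j = ω ^ j * (χ ^ j * ω ^ k) := by rw [hc, mul_one]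
        _ = (ω * χ) ^ j * ω ^ k := by rw [mul_pow]; ring
        _ = ω ^ k := by rw [hωχ, one_pow, one_mul]
    exact hω.pow_inj (Finset.mem_range.1 hj) (Finset.mem_range.1 hk) hjk2
  choose q hq0 hq using fun j => hreal (u j)
  have hvv : ipf P v v = ∑ j ∈ Finset.range m, (q j : ℂ) := by
    conv_lhs => rw [← hdecomp]
    rw [ipf_sum_left]
    refine Finset.sum_congr rfl fun j hj => ?_
    rw [ipf_sum_right,
      Finset.sum_eq_single_of_mem j hj (fun k hk hkj => horth j hj k hk (Ne.symm hkj))]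
    exact hq j
  refine ⟨q, hq0, hvv.symm, ?_, ?_⟩
  · have hBsum : B.mulVec v = ∑ k ∈ Finset.range m, ω ^ k • u k := by
      conv_lhs => rw [← hdecomp]
      rw [show B.mulVec (∑ k ∈ Finset.range m, u k)
          = ∑ k ∈ Finset.range m, B.mulVec (u k) from map_sum B.mulVecLin u (Finset.range m)]
      exact Finset.sum_congr rfl fun k _ => heig k
    conv_lhs => rw [hBsum, ← hdecomp]
    rw [ipf_sum_left]
    refine Finset.sum_congr rfl fun j hj => ?_
    rw [ipf_sum_right,
      Finset.sum_eq_single_of_mem j hj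
        (fun k hk hkj => by rw [ipf_smul_right, horth j hj k hk (Ne.symm hkj), mul_zero]),
      ipf_smul_right, hq j, mul_comm]
  · intro j hj hqj
    refine ⟨u j, fun h => hqj ?_, heig j⟩
    have := hq j
    rw [h, ipf_zero_left] at this
    exact_mod_cast this.symm

lemma sum_mulVec' {ι : Type*} (s : Finset ι) (f : ι → Matrix (Fin n) (Fin n) ℂ)
    (v : Fin n → ℂ) : (∑ i ∈ s, f i) *ᵥ v = ∑ i ∈ s, f i *ᵥ v := by
  induction s using Finset.cons_induction with
  | empty => simp [Matrix.zero_mulVec]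
  | cons a s ha ih => rw [Finset.sum_cons, Finset.sum_cons, Matrix.add_mulVec, ih]

lemma ipf_conj (P B : Matrix (Fin n) (Fin n) ℂ) (x y : Fin n → ℂ) :
    ipf P (B.mulVec x) (B.mulVec y) = ipf (Bᴴ * P * B) x y := by
  unfold ipf
  rw [star_mulVec, Matrix.mulVec_mulVec, ← Matrix.dotProduct_mulVec,
    Matrix.mulVec_mulVec, ← Matrix.mul_assoc]

lemma star_dot_self (w : Fin n → ℂ) :
    star w ⬝ᵥ w = ((∑ i, Complex.normSq (w i) : ℝ) : ℂ) := by
  rw [dotProduct]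
  push_cast
  refine Finset.sum_congr rfl fun i _ => ?_
  rw [Pi.star_apply, Complex.star_def, ← Complex.normSq_eq_conj_mul_self]

lemma spec_iff (M : Matrix (Fin n) (Fin n) ℂ) (z : ℂ) :
    z ∈ spectrum ℂ M ↔ ∃ v, v ≠ 0 ∧ M.mulVec v = z • v := by
  rw [← AlgEquiv.spectrum_eq (Matrix.toLinAlgEquiv' : Matrix (Fin n) (Fin n) ℂ ≃ₐ[ℂ] _),
    ← Module.End.hasEigenvalue_iff_mem_spectrum]
  constructor
  · intro h
    obtain ⟨v, hv⟩ := h.exists_hasEigenvector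
    exact ⟨v, hv.2, by simpa [Matrix.toLinAlgEquiv'_apply] using hv.apply_eq_smul⟩
  · rintro ⟨v, hv0, hv⟩
    exact Module.End.hasEigenvalue_of_hasEigenvector
      ⟨Module.End.mem_eigenspace_iff.2 (by simpa [Matrix.toLinAlgEquiv'_apply] using hv), hv0⟩

section Grp

variable (G : Subgroup (GL (Fin n) ℂ)) [Fintype ↥G]

/-- matrix of a group element -/
def mg (g : ↥G) : Matrix (Fin n) (Fin n) ℂ := ((g : GL (Fin n) ℂ) : Matrix (Fin n) (Fin n) ℂ)

lemma mg_mul (g h : ↥G) : mg G (g * h) = mg G g * mg G h := by simp [mg]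

lemma mg_one : mg G 1 = 1 := by simp [mg]

lemma mg_pow (g : ↥G) (k : ℕ) : mg G (g ^ k) = mg G g ^ k := by
  induction k with
  | zero => simp [mg_one]
  | succ k ih => rw [pow_succ, pow_succ, mg_mul, ih]

noncomputable def Pmat : Matrix (Fin n) (Fin n) ℂ := ∑ g : ↥G, (mg G g)ᴴ * mg G g

lemma Pmat_inv (g : ↥G) : (mg G g)ᴴ * Pmat G * mg G g = Pmat G := by
  unfold Pmat
  rw [Matrix.mul_sum, Matrix.sum_mul]
  refine Fintype.sum_equiv (Equiv.mulRight g) _ _ fun h => ?_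
  simp only [Equiv.coe_mulRight]
  rw [mg_mul, Matrix.conjTranspose_mul]
  simp only [Matrix.mul_assoc]

lemma Pmat_pos (w : Fin n → ℂ) :
    ∃ r : ℝ, 0 ≤ r ∧ ipf (Pmat G) w w = (r : ℂ) ∧ (w ≠ 0 → r ≠ 0) := by
  refine ⟨∑ g : ↥G, ∑ i, Complex.normSq ((mg G g).mulVec w i), ?_, ?_, ?_⟩
  · exact Finset.sum_nonneg fun g _ =>
      Finset.sum_nonneg fun i _ => Complex.normSq_nonneg _
  · unfold ipf Pmat
    rw [sum_mulVec', dotProduct_sum']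
    push_cast
    refine Finset.sum_congr rfl fun g _ => ?_
    have h1 : star w ⬝ᵥ ((mg G g)ᴴ * mg G g) *ᵥ w = ipf (Pmat G) ((mg G g).mulVec w) ((mg G g).mulVec w) → True := fun _ => trivial
    have h2 : ipf ((mg G g)ᴴ * 1 * mg G g) w w = ipf 1 ((mg G g).mulVec w) ((mg G g).mulVec w) :=
      (ipf_conj 1 (mg G g) w w).symm
    rw [Matrix.mul_one] at h2
    have h3 : ipf 1 ((mg G g).mulVec w) ((mg G g).mulVec w)
        = ((∑ i, Complex.normSq ((mg G g).mulVec w i) : ℝ) : ℂ) := by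
      unfold ipf
      rw [Matrix.one_mulVec, star_dot_self]
    rw [show star w ⬝ᵥ ((mg G g)ᴴ * mg G g) *ᵥ w = ipf ((mg G g)ᴴ * mg G g) w w from rfl,
      h2, h3]
    push_cast
    rfl
  · intro hw0
    have hex : ∃ i, w i ≠ 0 := Function.ne_iff.1 hw0
    obtain ⟨i0, hi0⟩ := hex
    have hpos : 0 < ∑ i, Complex.normSq ((mg G 1).mulVec w i) := by
      rw [mg_one, Matrix.one_mulVec]
      exact Finset.sum_pos' (fun i _ => Complex.normSq_nonneg _)
        ⟨i0, Finset.mem_univ _, Complex.normSq_pos.2 hi0⟩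
    have := Finset.sum_pos'
      (fun g (_ : g ∈ Finset.univ) => Finset.sum_nonneg fun i _ => Complex.normSq_nonneg ((mg G g).mulVec w i))
      ⟨1, Finset.mem_univ _, hpos⟩
    exact ne_of_gt this

end Grp

end HSproof


end HSaux

open HSproof Complex in
theorem hull_spectrum_subset_convexHull_polygons {n : ℕ}
    (G : Subgroup (GL (Fin n) ℂ)) [Finite G] :
    HS ((fun A : GL (Fin n) ℂ => (A : Matrix (Fin n) (Fin n) ℂ)) '' (G : Set (GL (Fin n) ℂ))) ⊆
      convexHull ℝ (⋃ k ∈ {k : ℕ | ∃ A ∈ G, ∃ μ : ℂ,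
          μ ∈ spectrum ℂ (A : Matrix (Fin n) (Fin n) ℂ) ∧ IsPrimitiveRoot μ k},
        convexHull ℝ {z : ℂ | z ^ k = 1}) := by
  classical
  have : Fintype ↥G := Fintype.ofFinite ↥G
  intro z hz
  obtain ⟨M, hM, hzM⟩ := hz
  rw [_root_.convexHull_eq] at hM
  obtain ⟨ι, t, w, fS, hw0, hw1, hfS, hMc⟩ := hM
  have hMsum : M = ∑ i ∈ t, w i • fS i := by
    rw [← hMc, Finset.centerMass_eq_of_sum_1 _ _ hw1]
  obtain ⟨v, hv0, hveig⟩ := (spec_iff M z).1 hzM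
  set P := Pmat G with hP
  obtain ⟨r, hr0, hrip, hrne'⟩ := Pmat_pos G v
  have hrne : r ≠ 0 := hrne' hv0
  have hrneC : (r : ℂ) ≠ 0 := Complex.ofReal_ne_zero.2 hrne
  set T := convexHull ℝ (⋃ k ∈ {k : ℕ | ∃ A ∈ G, ∃ μ : ℂ,
      μ ∈ spectrum ℂ ((A : GL (Fin n) ℂ) : Matrix (Fin n) (Fin n) ℂ) ∧ IsPrimitiveRoot μ k},
    convexHull ℝ {z : ℂ | z ^ k = 1}) with hT
  -- the per-element estimate
  have hper : ∀ A ∈ (fun A : GL (Fin n) ℂ => (A : Matrix (Fin n) (Fin n) ℂ)) ''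
      (G : Set (GL (Fin n) ℂ)),
      ∃ y ∈ T, ipf P v (A.mulVec v) = (r : ℂ) * y := by
    rintro _ ⟨g0, hg0, rfl⟩
    set g : ↥G := ⟨g0, hg0⟩ with hg
    set m := orderOf g with hmdef
    have hm : 0 < m := orderOf_pos g
    have hBm : (mg G g) ^ m = 1 := by rw [← mg_pow, pow_orderOf_eq_one, mg_one]
    have hinv : ∀ x y, ipf P ((mg G g).mulVec x) ((mg G g).mulVec y) = ipf P x y := by
      intro x y; rw [ipf_conj, hP, Pmat_inv]
    have hreal : ∀ u, ∃ s : ℝ, 0 ≤ s ∧ ipf P u u = (s : ℂ) := by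
      intro u
      obtain ⟨s, h1, h2, _⟩ := Pmat_pos G u
      exact ⟨s, h1, h2⟩
    obtain ⟨q, hq0, hqsum, hqip, hqeig⟩ := key hm P (mg G g) hBm hinv hreal v
    set ω : ℂ := exp (2 * Real.pi * I / m) with hω
    set F := (Finset.range m).filter (fun j => q j ≠ 0) with hF
    have hsumq : ∑ j ∈ Finset.range m, q j = r := by
      have h2 : ((∑ j ∈ Finset.range m, q j : ℝ) : ℂ) = (r : ℂ) := by
        push_cast
        exact hqsum.trans hrip
      exact_mod_cast h2
    have hsumF : ∑ j ∈ F, q j = r := by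
      rw [hF, Finset.sum_filter_of_ne (fun x _ h => h), hsumq]
    refine ⟨∑ j ∈ F, (q j / r) • (ω ^ j), ?_, ?_⟩
    · refine Convex.sum_mem (convex_convexHull ℝ _) (fun j _ => div_nonneg (hq0 j) hr0) ?_ ?_
      · rw [← Finset.sum_div, hsumF, div_self hrne]
      · intro j hj
        obtain ⟨hjr, hjq⟩ := Finset.mem_filter.1 hj
        obtain ⟨wv, hwv0, hwv⟩ := hqeig j hjr hjq
        apply subset_convexHull
        refine Set.mem_biUnion (?_ : orderOf (ω ^ j) ∈ _) ?_
        · exact ⟨g0, hg0, ω ^ j, (spec_iff _ _).2 ⟨wv, hwv0, hwv⟩, IsPrimitiveRoot.orderOf _⟩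
        · exact subset_convexHull ℝ _ (pow_orderOf_eq_one (ω ^ j))
    · show ipf P v ((mg G g).mulVec v) = _
      have hfiltereq : ∑ j ∈ F, (q j : ℂ) * ω ^ j
          = ∑ j ∈ Finset.range m, (q j : ℂ) * ω ^ j := by
        rw [hF]
        refine Finset.sum_filter_of_ne fun x hx h => ?_
        intro h0
        rw [h0] at h
        simp at h
      rw [hqip, ← hfiltereq, Finset.mul_sum]
      refine Finset.sum_congr rfl fun j hj => ?_
      rw [Complex.real_smul]
      push_cast
      field_simp
  -- choose the points
  have hex : ∀ i : {x // x ∈ t}, ∃ y ∈ T, ipf P v ((fS i).mulVec v) = (r : ℂ) * y :=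
    fun i => hper _ (hfS i i.2)
  choose y hyT hyeq using hex
  have hsmulmat : ∀ (c : ℝ) (A : Matrix (Fin n) (Fin n) ℂ), c • A = (c : ℂ) • A := by
    intro c A
    rw [← Complex.coe_algebraMap, algebraMap_smul]
  have e2 : M.mulVec v = ∑ i ∈ t.attach, ((w i : ℂ)) • ((fS i).mulVec v) := by
    rw [hMsum, ← Finset.sum_attach t (fun i => w i • fS i), sum_mulVec']
    refine Finset.sum_congr rfl fun i _ => ?_
    rw [hsmulmat, Matrix.smul_mulVec]
  have e1 : z * (r : ℂ) = ipf P v (M.mulVec v) := by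
    rw [hveig, ipf_smul_right, hrip]
  have e3 : ipf P v (M.mulVec v) = (r : ℂ) * ∑ i ∈ t.attach, (w i : ℂ) * y i := by
    rw [e2, ipf_sum_right, Finset.mul_sum]
    refine Finset.sum_congr rfl fun i _ => ?_
    rw [ipf_smul_right, hyeq i]
    ring
  have e4 : z = ∑ i ∈ t.attach, (w i : ℂ) * y i := by
    have h := e1.trans e3
    rw [mul_comm] at h
    exact mul_left_cancel₀ hrneC h
  have e5 : z = ∑ i ∈ t.attach, (w i) • y i := by
    rw [e4]
    exact Finset.sum_congr rfl fun i _ => (Complex.real_smul).symm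
  rw [e5]
  exact Convex.sum_mem (convex_convexHull ℝ _) (fun i _ => hw0 i i.2)
    (by rw [Finset.sum_attach t w]; exact hw1) (fun i _ => hyT i)
end

section
/- Let n ≥ 3, θ = 2π/n, and let G ⊆ GL_2(ℝ) be the dihedral group generated by the rotation R = [[cos θ, −sin θ],[sin θ, cos θ]] and the reflection S = [[0,1],[1,0]]. Then HS(G) = Π_n ∪ Π_2, where Π_k is the convex hull of the k-th roots of unity and Π_2 = [−1,1]. -/
open Matrix

namespace DihedralHull

open Complex Finset

noncomputable def phi (z : ℂ) : Matrix (Fin 2) (Fin 2) ℝ := !![z.re, -z.im; z.im, z.re]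

lemma phi_mul (z w : ℂ) : phi (z * w) = phi z * phi w := by
  ext i j
  fin_cases i <;> fin_cases j <;>
    simp [phi, Matrix.mul_apply, Fin.sum_univ_two, Complex.mul_re, Complex.mul_im] <;> ring

lemma phi_one : phi 1 = 1 := by
  ext i j; fin_cases i <;> fin_cases j <;> simp [phi, Matrix.one_apply]

lemma phi_pow (z : ℂ) (k : ℕ) : phi (z ^ k) = (phi z) ^ k := by
  induction k with
  | zero => simp [phi_one]
  | succ k ih => rw [pow_succ, pow_succ, phi_mul, ih]

lemma phi_add (z w : ℂ) : phi (z + w) = phi z + phi w := by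
  ext i j; fin_cases i <;> fin_cases j <;> simp [phi] <;> ring

lemma phi_smul (a : ℝ) (z : ℂ) : phi (a • z) = a • phi z := by
  ext i j; fin_cases i <;> fin_cases j <;> simp [phi]

lemma phi_isLinear : IsLinearMap ℝ phi := ⟨phi_add, phi_smul⟩

noncomputable def phiL : ℂ →ₗ[ℝ] Matrix (Fin 2) (Fin 2) ℝ := IsLinearMap.mk' phi phi_isLinear

lemma phi_mul_S (u : ℂ) :
    phi u * !![(0 : ℝ), 1; 1, 0] = !![-u.im, u.re; u.re, u.im] := by
  ext i j
  fin_cases i <;> fin_cases j <;> simp [phi, Matrix.mul_apply, Fin.sum_univ_two]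

lemma mem_spectrum_iff (A : Matrix (Fin 2) (Fin 2) ℝ) (z : ℂ) :
    z ∈ spectrum ℂ (A.map (Complex.ofReal : ℝ → ℂ)) ↔
      (z - (A 0 0 : ℂ)) * (z - (A 1 1 : ℂ)) - (A 0 1 : ℂ) * (A 1 0 : ℂ) = 0 := by
  rw [spectrum.mem_iff, Matrix.isUnit_iff_isUnit_det, isUnit_iff_ne_zero, not_not,
    Matrix.det_fin_two]
  simp only [Matrix.sub_apply, Matrix.algebraMap_matrix_apply, Matrix.map_apply]
  norm_num

lemma sq_set_eq : {z : ℂ | z ^ 2 = 1} = {1, -1} := by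
  ext z
  simp only [Set.mem_setOf_eq, Set.mem_insert_iff, Set.mem_singleton_iff]
  constructor
  · intro h
    have h' : (z - 1) * (z + 1) = 0 := by linear_combination h
    rcases mul_eq_zero.mp h' with h | h
    · left; linear_combination h
    · right; linear_combination h
  · rintro (rfl | rfl) <;> ring

lemma mem_hull_sq_iff (z : ℂ) :
    z ∈ convexHull ℝ {z : ℂ | z ^ 2 = 1} ↔ z.im = 0 ∧ |z.re| ≤ 1 := by
  rw [sq_set_eq, convexHull_pair]
  constructor
  · rintro ⟨a, b, ha, hb, hab, rfl⟩
    constructor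
    · simp
    · rw [abs_le]
      constructor <;> · simp; nlinarith
  · rintro ⟨h0, h1⟩
    refine ⟨(1 + z.re) / 2, (1 - z.re) / 2, by rw [abs_le] at h1; linarith,
      by rw [abs_le] at h1; linarith, by ring, ?_⟩
    apply Complex.ext <;> simp [h0] <;> ring

noncomputable def zeta (n : ℕ) : ℂ := Complex.exp ((2 * Real.pi / n : ℝ) * Complex.I)

lemma zeta_re (n : ℕ) : (zeta n).re = Real.cos (2 * Real.pi / n) := Complex.exp_ofReal_mul_I_re _
lemma zeta_im (n : ℕ) : (zeta n).im = Real.sin (2 * Real.pi / n) := Complex.exp_ofReal_mul_I_im _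

lemma phi_zeta (n : ℕ) :
    phi (zeta n) = !![Real.cos (2 * Real.pi / n), -Real.sin (2 * Real.pi / n);
      Real.sin (2 * Real.pi / n), Real.cos (2 * Real.pi / n)] := by
  unfold phi; rw [zeta_re, zeta_im]

lemma zeta_eq (n : ℕ) (hn : 0 < n) : zeta n = Complex.exp (2 * Real.pi * Complex.I / n) := by
  unfold zeta
  congr 1
  have : (n : ℂ) ≠ 0 := Nat.cast_ne_zero.mpr hn.ne'
  push_cast
  field_simp

lemma zeta_prim (n : ℕ) (hn : 0 < n) : IsPrimitiveRoot (zeta n) n := by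
  rw [zeta_eq n hn]; exact Complex.isPrimitiveRoot_exp n hn.ne'

lemma zeta_pow_n (n : ℕ) (hn : 0 < n) : zeta n ^ n = 1 := (zeta_prim n hn).pow_eq_one

lemma zeta_pow_mem (n : ℕ) (hn : 0 < n) (k : ℕ) : zeta n ^ k ∈ {z : ℂ | z ^ n = 1} := by
  show (zeta n ^ k) ^ n = 1
  rw [← pow_mul, mul_comm, pow_mul, zeta_pow_n n hn, one_pow]

lemma abs_zeta_pow (n : ℕ) (k : ℕ) : ‖zeta n ^ k‖ = 1 := by
  rw [norm_pow]
  unfold zeta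
  rw [Complex.norm_exp_ofReal_mul_I, one_pow]

lemma zeta_ne_one (n : ℕ) (hn : 3 ≤ n) : zeta n ≠ 1 := by
  intro h
  have him : (zeta n).im = 0 := by rw [h]; simp
  rw [zeta_im] at him
  have h1 : 0 < 2 * Real.pi / n := by positivity
  have h2 : 2 * Real.pi / n < Real.pi := by
    rw [div_lt_iff₀ (by positivity)]
    have : (3 : ℝ) ≤ n := by exact_mod_cast hn
    nlinarith [Real.pi_pos]
  exact (Real.sin_pos_of_pos_of_lt_pi h1 h2).ne' him

lemma sum_zeta (n : ℕ) (hn : 3 ≤ n) : ∑ k ∈ Finset.range n, zeta n ^ k = 0 := by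
  have h := geom_sum_eq (zeta_ne_one n hn) n
  rw [h, zeta_pow_n n (by omega)]
  simp

lemma zero_mem_hull (n : ℕ) (hn : 3 ≤ n) : (0 : ℂ) ∈ convexHull ℝ {z : ℂ | z ^ n = 1} := by
  have hc : Finset.centerMass (Finset.range n) (fun _ => (1 : ℝ))
      (fun k => zeta n ^ k) = 0 := by
    rw [Finset.centerMass]
    simp [sum_zeta n hn]
  rw [← hc]
  exact Finset.centerMass_mem_convexHull _ (fun i _ => by norm_num) (by simp; omega)
    (fun i _ => zeta_pow_mem n (by omega) i)

lemma conj_mem_hull (n : ℕ) {z : ℂ} (hz : z ∈ convexHull ℝ {z : ℂ | z ^ n = 1}) :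
    (starRingEnd ℂ) z ∈ convexHull ℝ {z : ℂ | z ^ n = 1} := by
  have hlin : IsLinearMap ℝ (fun z : ℂ => (starRingEnd ℂ) z) :=
    ⟨fun a b => by simp [map_add], fun a b => by simp [Complex.real_smul]⟩
  have himg := hlin.image_convexHull {z : ℂ | z ^ n = 1}
  have hmem : (starRingEnd ℂ) z ∈ (fun z : ℂ => (starRingEnd ℂ) z) ''
      convexHull ℝ {z : ℂ | z ^ n = 1} := ⟨z, hz, rfl⟩
  rw [himg] at hmem
  refine convexHull_mono ?_ hmem
  rintro _ ⟨u, hu, rfl⟩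
  show ((starRingEnd ℂ) u) ^ n = 1
  rw [← map_pow, hu, _root_.map_one]

/-- The "rotation part" of a matrix, as a complex number. -/
noncomputable def wc (A : Matrix (Fin 2) (Fin 2) ℝ) : ℂ :=
  ⟨(A 0 0 + A 1 1) / 2, (A 1 0 - A 0 1) / 2⟩

/-- The "reflection part" of a matrix, as a complex number. -/
noncomputable def vc (A : Matrix (Fin 2) (Fin 2) ℝ) : ℂ :=
  ⟨(A 0 0 - A 1 1) / 2, (A 0 1 + A 1 0) / 2⟩

lemma wc_conv (a b : ℝ) (M N : Matrix (Fin 2) (Fin 2) ℝ) :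
    wc (a • M + b • N) = a • wc M + b • wc N := by
  apply Complex.ext <;>
    simp [wc, Matrix.add_apply, Matrix.smul_apply, Complex.smul_re, Complex.smul_im,
      smul_eq_mul] <;> ring

lemma vc_conv (a b : ℝ) (M N : Matrix (Fin 2) (Fin 2) ℝ) :
    vc (a • M + b • N) = a • vc M + b • vc N := by
  apply Complex.ext <;>
    simp [vc, Matrix.add_apply, Matrix.smul_apply, Complex.smul_re, Complex.smul_im,
      smul_eq_mul] <;> ring

lemma wc_phi (u : ℂ) : wc (phi u) = u := by
  apply Complex.ext <;> simp [wc, phi] <;> ring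

lemma vc_phi (u : ℂ) : vc (phi u) = 0 := by
  apply Complex.ext <;> simp [vc, phi]

lemma wc_phiS (u : ℂ) : wc (phi u * !![(0 : ℝ), 1; 1, 0]) = 0 := by
  rw [phi_mul_S]
  apply Complex.ext <;> simp [wc] <;> ring

lemma vc_phiS (u : ℂ) : vc (phi u * !![(0 : ℝ), 1; 1, 0]) = Complex.I * u := by
  rw [phi_mul_S]
  apply Complex.ext <;> simp [vc] <;> ring

end DihedralHull

open DihedralHull Complex Finset

/-- The hull spectrum (over ℂ) of a set of real 2×2 matrices. -/
def HSR (S : Set (Matrix (Fin 2) (Fin 2) ℝ)) : Set ℂ :=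
  {z | ∃ M ∈ convexHull ℝ S, z ∈ spectrum ℂ (M.map (Complex.ofReal : ℝ → ℂ))}

set_option maxHeartbeats 1000000 in
theorem hull_spectrum_dihedral (n : ℕ) (hn : 3 ≤ n) :
    HSR ((fun k : ℕ => (!![Real.cos (2 * Real.pi / n), -Real.sin (2 * Real.pi / n);
            Real.sin (2 * Real.pi / n), Real.cos (2 * Real.pi / n)]) ^ k) '' Set.Iio n ∪
        (fun k : ℕ => (!![Real.cos (2 * Real.pi / n), -Real.sin (2 * Real.pi / n);
            Real.sin (2 * Real.pi / n), Real.cos (2 * Real.pi / n)]) ^ k *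
          !![(0 : ℝ), 1; 1, 0]) '' Set.Iio n) =
      convexHull ℝ {z : ℂ | z ^ n = 1} ∪ convexHull ℝ {z : ℂ | z ^ 2 = 1} := by
  have npos : 0 < n := by omega
  set G := ((fun k : ℕ => (!![Real.cos (2 * Real.pi / n), -Real.sin (2 * Real.pi / n);
            Real.sin (2 * Real.pi / n), Real.cos (2 * Real.pi / n)]) ^ k) '' Set.Iio n ∪
        (fun k : ℕ => (!![Real.cos (2 * Real.pi / n), -Real.sin (2 * Real.pi / n);
            Real.sin (2 * Real.pi / n), Real.cos (2 * Real.pi / n)]) ^ k *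
          !![(0 : ℝ), 1; 1, 0]) '' Set.Iio n) with hG
  ext z
  constructor
  · rintro ⟨M, hM, hz⟩
    -- convex-set facts about M
    have hMC : M ∈ {A : Matrix (Fin 2) (Fin 2) ℝ |
        wc A ∈ convexHull ℝ {z : ℂ | z ^ n = 1} ∧
        ‖wc A‖ + ‖vc A‖ ≤ 1} := by
      refine convexHull_min ?_ ?_ hM
      · rintro A (⟨k, hk, rfl⟩ | ⟨k, hk, rfl⟩) <;> simp only [Set.mem_setOf_eq]
        · rw [← phi_zeta, ← phi_pow]
          constructor
          · rw [wc_phi]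
            exact subset_convexHull ℝ _ (zeta_pow_mem n npos k)
          · rw [wc_phi, vc_phi, abs_zeta_pow]
            simp
        · rw [← phi_zeta, ← phi_pow]
          constructor
          · rw [wc_phiS]
            exact zero_mem_hull n hn
          · rw [wc_phiS, vc_phiS, norm_mul, abs_zeta_pow]
            simp
      · intro A hA B hB a b ha hb hab
        simp only [Set.mem_setOf_eq] at hA hB ⊢
        constructor
        · rw [wc_conv]
          exact (convex_convexHull ℝ _) hA.1 hB.1 ha hb hab
        · rw [wc_conv, vc_conv]
          have t1 : ‖a • wc A + b • wc B‖ ≤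
              a * ‖wc A‖ + b * ‖wc B‖ := by
            refine (norm_add_le _ _).trans ?_
            simp [Complex.real_smul, norm_mul, Complex.norm_real, Real.norm_eq_abs,
              _root_.abs_of_nonneg ha, _root_.abs_of_nonneg hb]
          have t2 : ‖a • vc A + b • vc B‖ ≤
              a * ‖vc A‖ + b * ‖vc B‖ := by
            refine (norm_add_le _ _).trans ?_
            simp [Complex.real_smul, norm_mul, Complex.norm_real, Real.norm_eq_abs,
              _root_.abs_of_nonneg ha, _root_.abs_of_nonneg hb]
          nlinarith [hA.2, hB.2, norm_nonneg (wc A), norm_nonneg (wc B),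
            norm_nonneg (vc A), norm_nonneg (vc B)]
    simp only [Set.mem_setOf_eq] at hMC
    obtain ⟨hw, habs⟩ := hMC
    set p : ℝ := (wc M).re with hp
    set q : ℝ := (wc M).im with hq
    set c : ℝ := (vc M).re with hc
    set d : ℝ := (vc M).im with hd
    have hM00 : M 0 0 = p + c := by rw [hp, hc]; simp [wc, vc]; ring
    have hM11 : M 1 1 = p - c := by rw [hp, hc]; simp [wc, vc]; ring
    have hM01 : M 0 1 = -q + d := by rw [hq, hd]; simp [wc, vc]; ring
    have hM10 : M 1 0 = q + d := by rw [hq, hd]; simp [wc, vc]; ring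
    rw [mem_spectrum_iff, hM00, hM11, hM01, hM10] at hz
    push_cast at hz
    have hu : (z - (p : ℂ)) ^ 2 = ((c ^ 2 + d ^ 2 - q ^ 2 : ℝ) : ℂ) := by
      push_cast
      linear_combination hz
    have hre : (z.re - p) ^ 2 - z.im ^ 2 = c ^ 2 + d ^ 2 - q ^ 2 := by
      have := congrArg Complex.re hu
      simpa [pow_two, Complex.mul_re, Complex.sub_re, Complex.sub_im] using this
    have him : (z.re - p) * z.im = 0 := by
      have := congrArg Complex.im hu
      simp [pow_two, Complex.mul_im, Complex.sub_re, Complex.sub_im] at this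
      linarith
    have habsw : p ^ 2 + q ^ 2 = ‖wc M‖ ^ 2 := by
      rw [Complex.sq_norm, Complex.normSq_apply, ← hp, ← hq]; ring
    have habsv : c ^ 2 + d ^ 2 = ‖vc M‖ ^ 2 := by
      rw [Complex.sq_norm, Complex.normSq_apply, ← hc, ← hd]; ring
    have hpabs : |p| ≤ ‖wc M‖ := Complex.abs_re_le_norm _
    rcases mul_eq_zero.mp him with hx | hy
    · -- z.re = p : complex eigenvalue, lands in Π_n
      have hxp : z.re = p := by linarith
      left
      have hy2 : z.im ^ 2 = q ^ 2 - (c ^ 2 + d ^ 2) := by nlinarith [hre]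
      by_cases hq0 : q = 0
      · have hz0 : z.im = 0 := by nlinarith [sq_nonneg z.im, sq_nonneg c, sq_nonneg d]
        have : z = wc M := by
          apply Complex.ext
          · rw [hxp]
          · rw [hz0, ← hq, hq0]
        rwa [this]
      · have hyq : |z.im| ≤ |q| := by
          nlinarith [sq_nonneg c, sq_nonneg d, abs_nonneg z.im, abs_nonneg q, _root_.sq_abs z.im,
            _root_.sq_abs q]
        set lam : ℝ := (z.im / q + 1) / 2 with hlam
        have hql : |z.im / q| ≤ 1 := by
          rw [abs_div]
          rw [div_le_one (by positivity)]
          exact hyq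
        rw [abs_le] at hql
        have h0l : 0 ≤ lam := by rw [hlam]; linarith
        have h1l : 0 ≤ 1 - lam := by rw [hlam]; linarith
        have hcomb := (convex_convexHull ℝ {z : ℂ | z ^ n = 1}) hw
          (conj_mem_hull n hw) h0l h1l (by ring)
        have hzeq : z = lam • wc M + (1 - lam) • (starRingEnd ℂ) (wc M) := by
          apply Complex.ext
          · simp [Complex.smul_re, ← hp, hxp]; ring
          · simp [Complex.smul_im, ← hq]
            rw [hlam]
            field_simp
            ring
        rwa [hzeq]
    · -- z.im = 0 : real eigenvalue, lands in Π_2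
      right
      rw [mem_hull_sq_iff]
      refine ⟨hy, ?_⟩
      have hre2 : (z.re - p) ^ 2 = c ^ 2 + d ^ 2 - q ^ 2 := by rw [← hre, hy]; ring
      have h1 : |z.re - p| ≤ ‖vc M‖ := by
        nlinarith [_root_.sq_abs (z.re - p), abs_nonneg (z.re - p), norm_nonneg (vc M),
          sq_nonneg q]
      rw [abs_le] at h1 hpabs ⊢
      constructor <;> nlinarith [habs]
  · intro hz
    rcases hz with hz | hz
    · -- Π_n direction
      refine ⟨phi z, ?_, ?_⟩
      · have himg := phi_isLinear.image_convexHull {z : ℂ | z ^ n = 1}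
        have hmem : phi z ∈ phi '' convexHull ℝ {z : ℂ | z ^ n = 1} := ⟨z, hz, rfl⟩
        rw [himg] at hmem
        refine convexHull_mono ?_ hmem
        rintro _ ⟨u, hu, rfl⟩
        haveI : NeZero n := ⟨npos.ne'⟩
        obtain ⟨k, hk, rfl⟩ := (zeta_prim n npos).eq_pow_of_pow_eq_one hu
        rw [hG]
        left
        exact ⟨k, hk, by rw [phi_pow, phi_zeta]⟩
      · rw [mem_spectrum_iff]
        show (z - ((phi z) 0 0 : ℂ)) * (z - ((phi z) 1 1 : ℂ))
            - ((phi z) 0 1 : ℂ) * ((phi z) 1 0 : ℂ) = 0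
        have e00 : (phi z) 0 0 = z.re := by simp [phi]
        have e11 : (phi z) 1 1 = z.re := by simp [phi]
        have e01 : (phi z) 0 1 = -z.im := by simp [phi]
        have e10 : (phi z) 1 0 = z.im := by simp [phi]
        rw [e00, e11, e01, e10]
        rw [Complex.ext_iff]
        push_cast
        constructor <;>
          · simp [Complex.mul_re, Complex.mul_im, Complex.sub_re, Complex.sub_im]
            try ring
    · -- Π_2 direction
      rw [mem_hull_sq_iff] at hz
      obtain ⟨him0, hre1⟩ := hz
      set t : ℝ := |z.re| with ht
      have ht0 : 0 ≤ t := abs_nonneg _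
      have ht1 : t ≤ 1 := hre1
      set w : ℕ → ℝ := fun k => (1 - t) / n + (if k = 0 then t else 0) with hwdef
      have hw0 : ∀ k ∈ Finset.range n, 0 ≤ w k := by
        intro k _
        simp only [hwdef]
        have h9 : (0 : ℝ) ≤ (1 - t) / n := by
          apply div_nonneg (by linarith) (by positivity)
        split <;> linarith
      have hwsum : ∑ k ∈ Finset.range n, w k = 1 := by
        simp only [hwdef]
        rw [Finset.sum_add_distrib, Finset.sum_const, Finset.card_range,
          Finset.sum_eq_single 0]
        · have hnne : (n : ℝ) ≠ 0 := by positivity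
          simp only [if_pos rfl, nsmul_eq_mul]
          field_simp
          simp
        · intro b _ hb; simp [hb]
        · intro h; exact absurd (Finset.mem_range.mpr npos) h
      set M : Matrix (Fin 2) (Fin 2) ℝ :=
        ∑ k ∈ Finset.range n, w k • (phi (zeta n ^ k) * !![(0 : ℝ), 1; 1, 0]) with hMdef
      have hMG : M ∈ convexHull ℝ G := by
        refine (convex_convexHull ℝ G).sum_mem hw0 hwsum ?_
        intro k hk
        apply subset_convexHull
        rw [hG]
        right
        exact ⟨k, Finset.mem_range.mp hk, by rw [phi_pow, phi_zeta]⟩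
      have hsumzeta : ∑ k ∈ Finset.range n, w k • zeta n ^ k = (t : ℂ) := by
        simp only [hwdef, add_smul]
        rw [Finset.sum_add_distrib, ← Finset.smul_sum, sum_zeta n hn, smul_zero, zero_add,
          Finset.sum_eq_single 0]
        · simp [Complex.real_smul]
        · intro b _ hb; simp [hb]
        · intro h; exact absurd (Finset.mem_range.mpr npos) h
      have hMval : M = phi (t : ℂ) * !![(0 : ℝ), 1; 1, 0] := by
        rw [hMdef]
        rw [Finset.sum_congr rfl (fun k _ => (smul_mul_assoc (w k) _ _).symm)]
        rw [← Finset.sum_mul]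
        congr 1
        have : ∑ k ∈ Finset.range n, w k • phi (zeta n ^ k)
            = phi (∑ k ∈ Finset.range n, w k • zeta n ^ k) := by
          rw [show phi = ⇑phiL from rfl, map_sum]
          exact Finset.sum_congr rfl (fun k _ => (phiL.map_smul _ _).symm)
        rw [this, hsumzeta]
      refine ⟨M, hMG, ?_⟩
      have hM2 : M = !![(0 : ℝ), t; t, 0] := by
        rw [hMval, phi_mul_S]
        norm_num
      rw [mem_spectrum_iff, hM2]
      have hzre : z = (z.re : ℂ) := by
        apply Complex.ext <;> simp [him0]
      rw [hzre]
      have e00 : (!![(0 : ℝ), t; t, 0]) 0 0 = 0 := by simp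
      have e11 : (!![(0 : ℝ), t; t, 0]) 1 1 = 0 := by simp
      have e01 : (!![(0 : ℝ), t; t, 0]) 0 1 = t := by simp
      have e10 : (!![(0 : ℝ), t; t, 0]) 1 0 = t := by simp
      rw [e00, e11, e01, e10]
      norm_cast
      rw [ht, abs_mul_abs_self]
      ring
end

section
/- Let G ⊆ GL_2(ℂ) be the image of the 2-dimensional irreducible representation of the quaternion group Q_8, generated by r = [[i,0],[0,−i]] and s = [[0,−1],[1,0]]. Then HS(G) = Π_4 = {z ∈ ℂ : |Re z| + |Im z| ≤ 1}. -/
open Matrix Complex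

lemma mem_spectrum_fin_two' (M : Matrix (Fin 2) (Fin 2) ℂ) (z : ℂ) :
    z ∈ spectrum ℂ M ↔ (z - M 0 0) * (z - M 1 1) - M 0 1 * M 1 0 = 0 := by
  rw [spectrum.mem_iff, Matrix.isUnit_iff_isUnit_det, isUnit_iff_ne_zero, not_ne_iff,
    Matrix.det_fin_two]
  simp [Matrix.algebraMap_matrix_apply]

/-- The set of matrices of the form `a•1 + b•r + c•s + d•rs` with ℓ¹-norm of coefficients ≤ 1. -/
def Cset : Set (Matrix (Fin 2) (Fin 2) ℂ) :=
  {M | ∃ a b c d : ℝ, |a| + |b| + |c| + |d| ≤ 1 ∧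
       M = !![(a : ℂ) + b * I, -(c : ℂ) - d * I; (c : ℂ) - d * I, (a : ℂ) - b * I]}

lemma Cset_convex : Convex ℝ Cset := by
  rintro M ⟨a, b, c, d, hab, rfl⟩ N ⟨a', b', c', d', hab', rfl⟩ t u ht hu htu
  refine ⟨t * a + u * a', t * b + u * b', t * c + u * c', t * d + u * d', ?_, ?_⟩
  · have h1 : |t * a + u * a'| ≤ t * |a| + u * |a'| := by
      calc |t * a + u * a'| ≤ |t * a| + |u * a'| := abs_add_le _ _
      _ = t * |a| + u * |a'| := by
        rw [abs_mul, abs_mul, _root_.abs_of_nonneg ht, _root_.abs_of_nonneg hu]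
    have h2 : |t * b + u * b'| ≤ t * |b| + u * |b'| := by
      calc |t * b + u * b'| ≤ |t * b| + |u * b'| := abs_add_le _ _
      _ = t * |b| + u * |b'| := by
        rw [abs_mul, abs_mul, _root_.abs_of_nonneg ht, _root_.abs_of_nonneg hu]
    have h3 : |t * c + u * c'| ≤ t * |c| + u * |c'| := by
      calc |t * c + u * c'| ≤ |t * c| + |u * c'| := abs_add_le _ _
      _ = t * |c| + u * |c'| := by
        rw [abs_mul, abs_mul, _root_.abs_of_nonneg ht, _root_.abs_of_nonneg hu]
    have h4 : |t * d + u * d'| ≤ t * |d| + u * |d'| := by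
      calc |t * d + u * d'| ≤ |t * d| + |u * d'| := abs_add_le _ _
      _ = t * |d| + u * |d'| := by
        rw [abs_mul, abs_mul, _root_.abs_of_nonneg ht, _root_.abs_of_nonneg hu]
    nlinarith [hab, hab']
  · ext i j
    fin_cases i <;> fin_cases j <;>
      simp [Matrix.add_apply, Matrix.smul_apply, Complex.real_smul] <;> push_cast <;> ring

lemma S_subset_Cset :
    ({1, -1, !![I, 0; 0, -I], -(!![I, 0; 0, -I]), !![0, -1; 1, 0], -(!![0, -1; 1, 0]),
        !![I, 0; 0, -I] * !![0, -1; 1, 0], -(!![I, 0; 0, -I] * !![0, -1; 1, 0])} :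
        Set (Matrix (Fin 2) (Fin 2) ℂ)) ⊆ Cset := by
  intro M hM
  rcases hM with rfl | rfl | rfl | rfl | rfl | rfl | rfl | rfl
  · exact ⟨1, 0, 0, 0, by norm_num,
      by ext i j; fin_cases i <;> fin_cases j <;> simp [Matrix.one_apply]⟩
  · exact ⟨-1, 0, 0, 0, by norm_num,
      by ext i j; fin_cases i <;> fin_cases j <;> simp [Matrix.one_apply]⟩
  · exact ⟨0, 1, 0, 0, by norm_num, by ext i j; fin_cases i <;> fin_cases j <;> simp⟩
  · exact ⟨0, -1, 0, 0, by norm_num, by ext i j; fin_cases i <;> fin_cases j <;> simp⟩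
  · exact ⟨0, 0, 1, 0, by norm_num, by ext i j; fin_cases i <;> fin_cases j <;> simp⟩
  · exact ⟨0, 0, -1, 0, by norm_num, by ext i j; fin_cases i <;> fin_cases j <;> simp⟩
  · exact ⟨0, 0, 0, 1, by norm_num,
      by rw [Matrix.mul_fin_two]; ext i j; fin_cases i <;> fin_cases j <;> simp⟩
  · refine ⟨0, 0, 0, -1, by norm_num, ?_⟩
    rw [show -(!![I, 0; 0, -I] * !![0, -1; 1, 0]) =
          -(!![(0:ℂ)*0+0*1, I*(-1)+0*0; 0*0+(-I)*1, 0*(-1)+(-I)*0]) from by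
        rw [Matrix.mul_fin_two]; ring_nf]
    ext i j; fin_cases i <;> fin_cases j <;> simp

lemma Cset_spectrum_bound (a b c d : ℝ) (z : ℂ)
    (habs : |a| + |b| + |c| + |d| ≤ 1)
    (h : z ∈ spectrum ℂ !![(a : ℂ) + b * I, -(c : ℂ) - d * I; (c : ℂ) - d * I, (a : ℂ) - b * I]) :
    |z.re| + |z.im| ≤ 1 := by
  rw [mem_spectrum_fin_two'] at h
  rw [show (!![(a : ℂ) + b * I, -(c : ℂ) - d * I; (c : ℂ) - d * I, (a : ℂ) - b * I] :
        Matrix (Fin 2) (Fin 2) ℂ) 0 0 = (a : ℂ) + b * I from rfl,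
    show (!![(a : ℂ) + b * I, -(c : ℂ) - d * I; (c : ℂ) - d * I, (a : ℂ) - b * I] :
        Matrix (Fin 2) (Fin 2) ℂ) 1 1 = (a : ℂ) - b * I from rfl,
    show (!![(a : ℂ) + b * I, -(c : ℂ) - d * I; (c : ℂ) - d * I, (a : ℂ) - b * I] :
        Matrix (Fin 2) (Fin 2) ℂ) 0 1 = -(c : ℂ) - d * I from rfl,
    show (!![(a : ℂ) + b * I, -(c : ℂ) - d * I; (c : ℂ) - d * I, (a : ℂ) - b * I] :
        Matrix (Fin 2) (Fin 2) ℂ) 1 0 = (c : ℂ) - d * I from rfl] at h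
  rw [Complex.ext_iff] at h
  obtain ⟨h1, h2⟩ := h
  simp only [Complex.sub_re, Complex.sub_im, Complex.mul_re, Complex.mul_im, Complex.add_re,
    Complex.add_im, Complex.neg_re, Complex.neg_im, Complex.ofReal_re, Complex.ofReal_im,
    Complex.I_re, Complex.I_im, Complex.zero_re, Complex.zero_im] at h1 h2
  set x := z.re; set y := z.im
  ring_nf at h1 h2
  rcases mul_eq_zero.mp (show (x - a) * y = 0 by nlinarith [h2]) with hxa | hy
  · have hxa' : x = a := by linarith [sub_eq_zero.mp hxa]
    subst hxa'
    have hy2 : y ^ 2 = b ^ 2 + c ^ 2 + d ^ 2 := by nlinarith [h1]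
    have : |y| ≤ |b| + |c| + |d| := by
      nlinarith [_root_.sq_abs y, _root_.sq_abs b, _root_.sq_abs c, _root_.sq_abs d,
        abs_nonneg y, abs_nonneg b, abs_nonneg c, abs_nonneg d,
        mul_nonneg (abs_nonneg b) (abs_nonneg c),
        mul_nonneg (abs_nonneg b) (abs_nonneg d), mul_nonneg (abs_nonneg c) (abs_nonneg d)]
    linarith
  · have hx : x = a := by nlinarith [h1, sq_nonneg (x - a), sq_nonneg b, sq_nonneg c, sq_nonneg d]
    have hb : b = 0 := by nlinarith [h1, sq_nonneg (x - a)]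
    have hc : c = 0 := by nlinarith [h1, sq_nonneg (x - a)]
    have hd : d = 0 := by nlinarith [h1, sq_nonneg (x - a)]
    rw [hx, hy, abs_zero]
    simp only [hb, hc, hd, abs_zero] at habs
    linarith

theorem hull_spectrum_quaternion :
    HS ({1, -1, !![I, 0; 0, -I], -(!![I, 0; 0, -I]), !![0, -1; 1, 0], -(!![0, -1; 1, 0]),
        !![I, 0; 0, -I] * !![0, -1; 1, 0], -(!![I, 0; 0, -I] * !![0, -1; 1, 0])} :
        Set (Matrix (Fin 2) (Fin 2) ℂ)) =
      {z : ℂ | |z.re| + |z.im| ≤ 1} := by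
  ext z
  simp only [HS, Set.mem_setOf_eq]
  constructor
  · rintro ⟨M, hM, hz⟩
    have hC : M ∈ Cset := convexHull_min S_subset_Cset Cset_convex hM
    obtain ⟨a, b, c, d, habs, rfl⟩ := hC
    exact Cset_spectrum_bound a b c d z habs hz
  · intro hz
    set x := z.re with hx
    set y := z.im with hy
    set S : Set (Matrix (Fin 2) (Fin 2) ℂ) := {1, -1, !![I, 0; 0, -I], -(!![I, 0; 0, -I]),
      !![0, -1; 1, 0], -(!![0, -1; 1, 0]),
      !![I, 0; 0, -I] * !![0, -1; 1, 0], -(!![I, 0; 0, -I] * !![0, -1; 1, 0])} with hS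
    refine ⟨!![(x : ℂ) + y * I, 0; 0, (x : ℂ) - y * I], ?_, ?_⟩
    · set w : Fin 4 → ℝ := ![(1 - |x| - |y|) / 2 + max x 0, (1 - |x| - |y|) / 2 + max (-x) 0,
        max y 0, max (-y) 0] with hw
      set p : Fin 4 → Matrix (Fin 2) (Fin 2) ℂ := ![1, -1, !![I, 0; 0, -I], -(!![I, 0; 0, -I])]
        with hp
      have hsum : ∑ i : Fin 4, w i • p i = !![(x : ℂ) + y * I, 0; 0, (x : ℂ) - y * I] := by
        rw [Fin.sum_univ_four]
        have e1 : max x 0 - max (-x) 0 = x := max_zero_sub_eq_self x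
        have e2 : max y 0 - max (-y) 0 = y := max_zero_sub_eq_self y
        ext i j
        fin_cases i <;> fin_cases j <;>
          · simp [hw, hp, Matrix.add_apply, Matrix.smul_apply, Matrix.one_apply,
              Complex.real_smul, Complex.ext_iff]
            try constructor
            all_goals (push_cast; ring_nf; linarith [e1, e2])
      rw [← hsum]
      apply (convex_convexHull ℝ S).sum_mem
      · intro i _
        have h0 : (0:ℝ) ≤ (1 - |x| - |y|) / 2 := by linarith
        fin_cases i
        · exact add_nonneg h0 (le_max_right x 0)
        · exact add_nonneg h0 (le_max_right (-x) 0)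
        · exact le_max_right y 0
        · exact le_max_right (-y) 0
      · rw [Fin.sum_univ_four]
        have e1 : max x 0 + max (-x) 0 = |x| := max_zero_add_max_neg_zero_eq_abs_self x
        have e2 : max y 0 + max (-y) 0 = |y| := max_zero_add_max_neg_zero_eq_abs_self y
        simp only [hw]
        simp only [Matrix.cons_val_zero, Matrix.cons_val_one, Matrix.head_cons,
          Matrix.cons_val_two, Matrix.cons_val_three, Matrix.tail_cons]
        linarith [e1, e2]
      · intro i _
        fin_cases i
        · exact subset_convexHull ℝ S (Set.mem_insert _ _)
        · exact subset_convexHull ℝ S (by right; left; rfl)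
        · exact subset_convexHull ℝ S (by right; right; left; rfl)
        · exact subset_convexHull ℝ S (by right; right; right; left; rfl)
    · rw [mem_spectrum_fin_two']
      have hz00 : (!![(x : ℂ) + y * I, 0; 0, (x : ℂ) - y * I] :
          Matrix (Fin 2) (Fin 2) ℂ) 0 0 = (x : ℂ) + y * I := rfl
      have hz01 : (!![(x : ℂ) + y * I, 0; 0, (x : ℂ) - y * I] :
          Matrix (Fin 2) (Fin 2) ℂ) 0 1 = 0 := rfl
      rw [hz00, hz01, Complex.re_add_im, sub_self, zero_mul, zero_mul, sub_zero]
end
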